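/- Let $\mu>0$, $\sigma\neq 0$, $\gamma\in[1/2,1)$, $T>0$, and $0<\theta\le T$. Suppose $w:[0,\theta)\to\mathbb{R}$ is measurable with $\int_0^{\theta} e^{-\mu(1-\gamma)s} w_s\,ds = -\frac{1}{\sigma(1-\gamma)}$. Then $\int_0^{\theta} w_s^2\,ds \ge \frac{2\mu}{\sigma^2(1-\gamma)(1-e^{-2\mu(1-\gamma)\theta})} \ge \frac{2\mu}{\sigma^2(1-\gamma)(1-e^{-2\mu(1-\gamma)T})}$. -/
import Mathlib


open Real MeasureTheory

open intervalIntegral in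
lemma int_exp_mul_aux (c b : ℝ) (hc : c ≠ 0) :
    ∫ s in (0:ℝ)..b, Real.exp (c*s) = (Real.exp (c*b) - 1)/c := by
  have h : (∫ x in (0:ℝ)..b, Real.exp (c*x)) = c⁻¹ • ∫ x in (c*0)..(c*b), Real.exp x :=
    integral_comp_mul_left (fun x => Real.exp x) hc
  simp only [integral_exp, mul_zero, Real.exp_zero, smul_eq_mul] at h
  rw [h]
  field_simp

lemma aux_cs (A B K : ℝ) (hB : 0 < B)
    (h : 0 ≤ A - 2*(K/B)*K + (K/B)^2*B) : K^2/B ≤ A := by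
  have hBne : B ≠ 0 := ne_of_gt hB
  have e1 : A - 2*(K/B)*K + (K/B)^2*B = A - K^2/B := by
    field_simp
    ring
  rw [e1] at h
  linarith

theorem cauchy_schwarz_control_lower_bound (μ σ γ T θ : ℝ) (hμ : 0 < μ) (hσ : σ ≠ 0)
    (hγ : γ ∈ Set.Ico (1/2 : ℝ) 1) (hT : 0 < T) (hθ0 : 0 < θ) (hθT : θ ≤ T)
    (w : ℝ → ℝ) (hmeas : Measurable w)
    (hw2 : IntervalIntegrable (fun s => (w s)^2) volume 0 θ)
    (hconstraint : ∫ s in (0:ℝ)..θ, Real.exp (-μ*(1-γ)*s) * w s = -1/(σ*(1-γ))) :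
    (2*μ) / (σ^2*(1-γ)*(1 - Real.exp (-2*μ*(1-γ)*θ))) ≤ ∫ s in (0:ℝ)..θ, (w s)^2
    ∧ (2*μ) / (σ^2*(1-γ)*(1 - Real.exp (-2*μ*(1-γ)*T)))
        ≤ (2*μ) / (σ^2*(1-γ)*(1 - Real.exp (-2*μ*(1-γ)*θ))) := by
  obtain ⟨hγ1, hγ2⟩ := hγ
  have h1γ : 0 < 1 - γ := by linarith
  have ha : 0 < μ * (1 - γ) := mul_pos hμ h1γ
  have hσ2 : 0 < σ^2 := (sq_nonneg σ).lt_of_ne' (pow_ne_zero 2 hσ)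
  have hKne : -1/(σ*(1-γ)) ≠ 0 := by
    simp only [ne_eq, div_eq_zero_iff]
    push_neg
    exact ⟨by norm_num, mul_ne_zero hσ (ne_of_gt h1γ)⟩
  -- integrability of exp * w
  have hew : IntervalIntegrable (fun s => Real.exp (-μ*(1-γ)*s) * w s) volume 0 θ := by
    by_contra h
    rw [intervalIntegral.integral_undef h] at hconstraint
    exact hKne hconstraint.symm
  -- exp squared
  have he2cont : Continuous (fun s : ℝ => (Real.exp (-μ*(1-γ)*s))^2) := by continuity
  have he2 : IntervalIntegrable (fun s => (Real.exp (-μ*(1-γ)*s))^2) volume 0 θ :=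
    he2cont.intervalIntegrable 0 θ
  have hc2 : (-2*μ*(1-γ)) ≠ 0 := by
    intro h; nlinarith
  have hE2val : ∫ s in (0:ℝ)..θ, (Real.exp (-μ*(1-γ)*s))^2
      = (Real.exp (-2*μ*(1-γ)*θ) - 1)/(-2*μ*(1-γ)) := by
    rw [← int_exp_mul_aux (-2*μ*(1-γ)) θ hc2]
    apply intervalIntegral.integral_congr
    intro s _
    simp only [sq, ← Real.exp_add]
    congr 1
    ring
  have hEθ : Real.exp (-2*μ*(1-γ)*θ) < 1 :=
    Real.exp_lt_one_iff.mpr (by nlinarith)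
  have hE2pos : 0 < ∫ s in (0:ℝ)..θ, (Real.exp (-μ*(1-γ)*s))^2 := by
    rw [hE2val]
    apply div_pos_of_neg_of_neg <;> nlinarith
  set c : ℝ := (-1/(σ*(1-γ))) / (∫ s in (0:ℝ)..θ, (Real.exp (-μ*(1-γ)*s))^2) with hc
  have hnonneg : 0 ≤ ∫ s in (0:ℝ)..θ, (w s - c * Real.exp (-μ*(1-γ)*s))^2 := by
    apply intervalIntegral.integral_nonneg hθ0.le
    intro s _
    positivity
  have hexpand : (fun s => (w s - c * Real.exp (-μ*(1-γ)*s))^2)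
      = (fun s => ((w s)^2 - (2*c) * (Real.exp (-μ*(1-γ)*s) * w s)) + c^2 * (Real.exp (-μ*(1-γ)*s))^2) := by
    funext s; ring
  rw [hexpand, intervalIntegral.integral_add (hw2.sub (hew.const_mul (2*c)))
      (he2.const_mul (c^2)),
    intervalIntegral.integral_sub hw2 (hew.const_mul (2*c)),
    intervalIntegral.integral_const_mul, intervalIntegral.integral_const_mul,
    hconstraint] at hnonneg
  have hkey : (-1/(σ*(1-γ)))^2 / (∫ s in (0:ℝ)..θ, (Real.exp (-μ*(1-γ)*s))^2)
      ≤ ∫ s in (0:ℝ)..θ, (w s)^2 := by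
    apply aux_cs _ _ _ hE2pos
    rw [← hc]
    linarith [hnonneg]
  constructor
  · refine le_trans (le_of_eq ?_) hkey
    rw [hE2val]
    have hgen : ∀ E : ℝ, E < 1 →
        2*μ / (σ^2*(1-γ)*(1-E)) = (-1/(σ*(1-γ)))^2 / ((E - 1)/(-2*μ*(1-γ))) := by
      intro E hE
      have h1 : (1:ℝ) - E ≠ 0 := ne_of_gt (by linarith)
      have h2 : E - 1 ≠ 0 := by intro h; apply h1; linarith
      have h3 : (1:ℝ) - γ ≠ 0 := ne_of_gt h1γ
      field_simp
      ring
    exact hgen _ hEθ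
  · have hET : Real.exp (-2*μ*(1-γ)*T) ≤ Real.exp (-2*μ*(1-γ)*θ) :=
      Real.exp_le_exp.mpr (by nlinarith)
    have hp : 0 < σ^2*(1-γ)*(1 - Real.exp (-2*μ*(1-γ)*θ)) :=
      mul_pos (mul_pos hσ2 h1γ) (by linarith)
    have hle : σ^2*(1-γ)*(1 - Real.exp (-2*μ*(1-γ)*θ))
        ≤ σ^2*(1-γ)*(1 - Real.exp (-2*μ*(1-γ)*T)) := by
      apply mul_le_mul_of_nonneg_left (by linarith) (by positivity)
    exact div_le_div_of_nonneg_left (by positivity) hp hle
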